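/- If f is a P-function (f nonnegative with f(tx+(1-t)y) ≤ f(x)+f(y)), then f((a+b)/2) ≤ (2/(b-a))∫_a^b f(x) dx ≤ 2[f(a)+f(b)]. -/

import Mathlib

open MeasureTheory

theorem p_function_hadamard (f : ℝ → ℝ) (I : Set ℝ) (a b : ℝ)
    (hI : Convex ℝ I)
    (hf : ∀ x ∈ I, 0 ≤ f x)
    (hP : ∀ x ∈ I, ∀ y ∈ I, ∀ t ∈ Set.Icc (0:ℝ) 1,
      f (t * x + (1 - t) * y) ≤ f x + f y)
    (haI : a ∈ I) (hbI : b ∈ I) (hab : a < b)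
    (hfint : IntegrableOn f (Set.Icc a b)) :
    f ((a + b) / 2) ≤ (2 / (b - a)) * ∫ x in a..b, f x ∧
    (2 / (b - a)) * ∫ x in a..b, f x ≤ 2 * (f a + f b) := by
  have hsub : Set.Icc a b ⊆ I := hI.ordConnected.out haI hbI
  have hba : (0:ℝ) < b - a := by linarith
  have hint : IntervalIntegrable f volume a b := by
    rw [intervalIntegrable_iff_integrableOn_Ioc_of_le hab.le]
    exact hfint.mono_set Set.Ioc_subset_Icc_self
  have hint2 : IntervalIntegrable (fun x => f (a + b - x)) volume a b := by
    have h := (hint.comp_sub_left (a + b)).symm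
    simpa using h
  have hub : ∀ x ∈ Set.Icc a b, f x ≤ f a + f b := by
    intro x hx
    have ht : (b - x)/(b-a) ∈ Set.Icc (0:ℝ) 1 := by
      constructor
      · apply div_nonneg (by linarith [hx.2]) hba.le
      · rw [div_le_one hba]; linarith [hx.1]
    have h := hP a haI b hbI _ ht
    have hx' : ((b-x)/(b-a)) * a + (1 - (b-x)/(b-a)) * b = x := by
      field_simp; ring
    rwa [hx'] at h
  have hlb : ∀ x ∈ Set.Icc a b, f ((a+b)/2) ≤ f x + f (a + b - x) := by
    intro x hx
    have hx2 : a + b - x ∈ Set.Icc a b := ⟨by linarith [hx.2], by linarith [hx.1]⟩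
    have h := hP x (hsub hx) (a+b-x) (hsub hx2) (1/2) (by norm_num)
    have he : (1/2:ℝ) * x + (1 - 1/2) * (a+b-x) = (a+b)/2 := by ring
    rwa [he] at h
  have hrefl : (∫ x in a..b, f (a + b - x)) = ∫ x in a..b, f x := by
    have h := intervalIntegral.integral_comp_sub_left (a := a) (b := b) f (a+b)
    simpa using h
  have h1 : (b - a) * f ((a+b)/2) ≤ 2 * ∫ x in a..b, f x := by
    have h := intervalIntegral.integral_mono_on hab.le
      (intervalIntegrable_const (c := f ((a+b)/2))) (hint.add hint2) hlb
    rw [intervalIntegral.integral_const, intervalIntegral.integral_add hint hint2,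
      hrefl, smul_eq_mul] at h
    linarith
  have h2 : (∫ x in a..b, f x) ≤ (b - a) * (f a + f b) := by
    have h := intervalIntegral.integral_mono_on hab.le hint
      (intervalIntegrable_const (c := f a + f b)) hub
    rwa [intervalIntegral.integral_const, smul_eq_mul] at h
  constructor
  · rw [div_mul_eq_mul_div, le_div_iff₀ hba]; linarith
  · rw [div_mul_eq_mul_div, div_le_iff₀ hba]; nlinarith [hf a haI, hf b hbI]
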